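/- If f : ℝ → ℝ satisfies f(x - f(x) + f(y)) = f(y) for all x, y ∈ ℝ, the range of x ↦ x - f(x) equals [0,1), and f(0) = 0, then f(x) = ⌊x⌋ for all x ∈ ℝ. -/

import Mathlib

theorem floor_characterization (f : ℝ → ℝ)
    (h1 : ∀ x y : ℝ, f (x - f x + f y) = f y)
    (h2 : Set.range (fun x : ℝ => x - f x) = Set.Ico (0:ℝ) 1)
    (h3 : f 0 = 0) :
    ∀ x : ℝ, f x = ⌊x⌋ := by
  have hg : ∀ x : ℝ, 0 ≤ x - f x ∧ x - f x < 1 := by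
    intro x
    have hx : x - f x ∈ Set.Ico (0:ℝ) 1 := by
      rw [← h2]; exact ⟨x, rfl⟩
    exact ⟨hx.1, hx.2⟩
  have key : ∀ r : ℝ, 0 ≤ r → r < 1 → ∀ y, f (r + f y) = f y := by
    intro r hr0 hr1 y
    have hr : r ∈ Set.Ico (0:ℝ) 1 := ⟨hr0, hr1⟩
    rw [← h2] at hr
    obtain ⟨x, hx⟩ := hr
    have h := h1 x y
    simp only at hx
    rw [hx] at h
    exact h
  have fix : ∀ y : ℝ, f (f y) = f y := by
    intro y
    have h := key 0 le_rfl one_pos y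
    simpa using h
  have step : ∀ z : ℝ, f z = z → f (z + 1) = z + 1 := by
    intro z hz
    obtain ⟨h01, h02⟩ := hg (z + 1)
    set w := f (z + 1) with hw
    have hw1 : z < w := by linarith
    have hw2 : w ≤ z + 1 := by linarith
    rcases eq_or_lt_of_le hw2 with h | h
    · exact h
    · exfalso
      have hfw : f w = w := fix (z + 1)
      have hk := key (w - z) (by linarith) (by linarith) z
      rw [hz] at hk
      have he : w - z + z = w := by ring
      rw [he] at hk
      rw [hfw] at hk
      linarith
  have neg_step : ∀ a : ℝ, f a = a → f (a - 1) = a - 1 := by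
    intro a ha
    set z := f (a - 1) with hzdef
    obtain ⟨h01, h02⟩ := hg (a - 1)
    have hz : f z = z := fix (a - 1)
    have hz1 : f (z + 1) = z + 1 := step z hz
    have hk := key (a - (z + 1)) (by linarith) (by linarith) (z + 1)
    rw [hz1] at hk
    have he : a - (z + 1) + (z + 1) = a := by ring
    rw [he] at hk
    rw [ha] at hk
    linarith
  have fn : ∀ n : ℤ, f (n : ℝ) = n := by
    intro n
    induction n using Int.induction_on with
    | zero => simpa using h3
    | succ k ih =>
      have h := step ((k : ℤ) : ℝ) ih
      push_cast at h ⊢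
      convert h using 2
    | pred k ih =>
      have h := neg_step ((-(k : ℤ) : ℤ) : ℝ) ih
      push_cast at h ⊢
      convert h using 2
  intro x
  have hfl : ((⌊x⌋ : ℝ)) ≤ x := Int.floor_le x
  have hfl2 : x < ⌊x⌋ + 1 := Int.lt_floor_add_one x
  have hk := key (x - ⌊x⌋) (by linarith) (by linarith) ((⌊x⌋ : ℝ))
  rw [fn ⌊x⌋] at hk
  have he : x - (⌊x⌋ : ℝ) + (⌊x⌋ : ℝ) = x := by ring
  rw [he] at hk
  exact hk
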